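/- arXiv:2501.03351 — 2 statements merged into one kernel-verified Lean document; each statement's English description precedes it below -/
import Mathlib

section
/- Let n ≥ 2 be an even integer and define the Plancherel density ν(λ) = (2/π)·|c(λ)|^{-2} for λ ∈ ℝ \ {0}. Then there exist constants C₁, C₂ > 0 such that C₁·(1+|λ|)^{n-1} ≤ ν(λ) ≤ C₂·(1+|λ|)^{n-1} for all λ ∈ ℝ \ {0}. -/
open Complex Real

private lemma abs_gamma_I_sq (t : ℝ) (ht : t ≠ 0) :
    (‖Complex.Gamma (Complex.I * t)‖)^2 * (t * Real.sinh (π * t)) = π := by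
  have hz : (Complex.I * t : ℂ) ≠ 0 := by
    simp [Complex.ext_iff, ht]
  have hrefl := Complex.Gamma_mul_Gamma_one_sub (Complex.I * t)
  have h1 : (1 : ℂ) - Complex.I * t = (-(Complex.I * t)) + 1 := by ring
  have h2 : Complex.Gamma ((-(Complex.I * t)) + 1) = (-(Complex.I * t)) * Complex.Gamma (-(Complex.I * t)) :=
    Complex.Gamma_add_one _ (by simpa using hz)
  have h3 : (-(Complex.I * t) : ℂ) = (starRingEnd ℂ) (Complex.I * t) := by
    simp [Complex.ext_iff]
  have h4 : Complex.Gamma (-(Complex.I * t)) = (starRingEnd ℂ) (Complex.Gamma (Complex.I * t)) := by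
    rw [h3, Complex.Gamma_conj]
  have hsin : Complex.sin (π * (Complex.I * t)) = (Real.sinh (π * t) : ℝ) * Complex.I := by
    have : (π : ℂ) * (Complex.I * t) = ((π * t : ℝ) : ℂ) * Complex.I := by push_cast; ring
    rw [this, Complex.sin_mul_I, Complex.ofReal_sinh]
  have habs : Complex.Gamma (Complex.I * t) * (starRingEnd ℂ) (Complex.Gamma (Complex.I * t)) =
      ((‖Complex.Gamma (Complex.I * t)‖ : ℝ) : ℂ)^2 := by
    rw [Complex.mul_conj, ← Complex.sq_norm]
    push_cast; ring
  have key : ((‖Complex.Gamma (Complex.I * t)‖)^2 : ℂ) * (-(Complex.I * t)) =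
      (π : ℂ) / ((Real.sinh (π * t) : ℝ) * Complex.I) := by
    rw [← hsin, ← hrefl, h1, h2, h4]
    rw [← habs]; ring
  have hs : Real.sinh (π * t) ≠ 0 :=
    Real.sinh_ne_zero.mpr (mul_ne_zero Real.pi_ne_zero ht)
  have hI : ((Real.sinh (π * t) : ℝ) : ℂ) * Complex.I ≠ 0 :=
    mul_ne_zero (Complex.ofReal_ne_zero.mpr hs) Complex.I_ne_zero
  rw [eq_div_iff hI] at key
  have key2 : ((‖Complex.Gamma (Complex.I * t)‖)^2 * (t * Real.sinh (π * t)) : ℂ) = (π : ℂ) := by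
    linear_combination key + ((‖Complex.Gamma (Complex.I * t)‖ : ℂ))^2 * (t:ℂ) * ((Real.sinh (π * t) : ℝ) : ℂ) * Complex.I_sq
  exact_mod_cast key2

private lemma gamma_shift (t : ℝ) (ht : t ≠ 0) (k : ℕ) :
    Complex.Gamma (Complex.I * t + k) =
      (∏ j ∈ Finset.range k, (Complex.I * t + j)) * Complex.Gamma (Complex.I * t) := by
  induction k with
  | zero => simp
  | succ k ih =>
    have hne : (Complex.I * t + k : ℂ) ≠ 0 := by
      intro h
      have := congrArg Complex.im h
      simp [ht] at this
    rw [show ((k+1 : ℕ) : ℂ) = (k : ℂ) + 1 by push_cast; ring]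
    rw [show (Complex.I * (t:ℂ) + ((k:ℂ) + 1)) = (Complex.I * t + k) + 1 by ring,
      Complex.Gamma_add_one _ hne, ih, Finset.prod_range_succ]
    ring

private lemma coth_bounds (l : ℝ) (hl : 0 < l) :
    (1/(4*π)) * (1 + l) ≤ l * Real.cosh (π*l) / Real.sinh (π*l) ∧
      l * Real.cosh (π*l) / Real.sinh (π*l) ≤ 1 + l := by
  set x := π * l with hx
  have hxpos : 0 < x := mul_pos Real.pi_pos hl
  have hs : 0 < Real.sinh x := Real.sinh_pos_iff.mpr hxpos
  have hc : 0 < Real.cosh x := Real.cosh_pos x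
  have he1 : 1 + 2*x ≤ Real.exp (2*x) := by linarith [Real.add_one_le_exp (2*x)]
  have he2 : 1 - 2*x ≤ Real.exp (-(2*x)) := by
    have := Real.add_one_le_exp (-(2*x)); linarith
  have hexp : Real.sinh x = (Real.exp x - Real.exp (-x)) / 2 := Real.sinh_eq x
  have hcosh : Real.cosh x = (Real.exp x + Real.exp (-x)) / 2 := Real.cosh_eq x
  have hprod : Real.exp x * Real.exp (-x) = 1 := by
    rw [← Real.exp_add]; simp
  have hex : 0 < Real.exp x := Real.exp_pos x
  have hex' : 0 < Real.exp (-x) := Real.exp_pos (-x)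
  have h2x : Real.exp (2*x) = Real.exp x * Real.exp x := by
    rw [← Real.exp_add]; ring_nf
  have h2x' : Real.exp (-(2*x)) = Real.exp (-x) * Real.exp (-x) := by
    rw [← Real.exp_add]; ring_nf
  have hlow : x * Real.exp (-x) ≤ Real.sinh x := by
    rw [hexp]
    nlinarith [he1, hex']
  have hhigh : Real.sinh x ≤ x * Real.exp x := by
    rw [hexp]
    nlinarith [he2, hex]
  have hcl : Real.exp x / 2 ≤ Real.cosh x := by rw [hcosh]; linarith
  have hcs : Real.cosh x - Real.sinh x = Real.exp (-x) := Real.cosh_sub_sinh x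
  constructor
  · rw [le_div_iff₀ hs]
    have h1 : l * Real.sinh x ≤ l * Real.cosh x := by nlinarith
    have h2 : Real.sinh x ≤ 2*π*(l * Real.cosh x) := by
      have hπ : 0 < π := Real.pi_pos
      have : Real.exp x ≤ 2 * Real.cosh x := by linarith
      calc Real.sinh x ≤ x * Real.exp x := hhigh
        _ = π * l * Real.exp x := by rw [hx]
        _ ≤ 2*π*(l * Real.cosh x) := by nlinarith
    have hπ1 : 1 ≤ π := by linarith [Real.pi_gt_three]
    rw [show (1/(4*π)*(1+l)*Real.sinh x) = ((1+l)*Real.sinh x)/(4*π) by ring,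
      div_le_iff₀ (by positivity : (0:ℝ) < 4*π)]
    nlinarith [mul_pos hl hc, mul_pos hl hs]
  · rw [div_le_iff₀ hs]
    have hπ1 : 1 ≤ π := by linarith [Real.pi_gt_three]
    have : l * Real.exp (-x) ≤ x * Real.exp (-x) := by
      apply mul_le_mul_of_nonneg_right _ hex'.le
      rw [hx]; nlinarith
    nlinarith [hlow]

private lemma Gamma_I_mul_ne_zero (t : ℝ) (ht : t ≠ 0) : Complex.Gamma (Complex.I * t) ≠ 0 := by
  apply Complex.Gamma_ne_zero
  intro m h
  have := congrArg Complex.im h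
  simp [ht] at this

/-- Strichartz-type estimate for the Plancherel density (n even):
`ν(λ) = (2/π)·|c(λ)|⁻²` with
`c(λ) = 2^(n−2iλ) Γ(n/2) Γ(2iλ) / (Γ(iλ + n/2) Γ(iλ))` satisfies
`ν(λ) ≍ (1+|λ|)^(n−1)` on `ℝ \ {0}`. -/
theorem plancherel_density_asymp_even
    (n : ℕ) (hn : 2 ≤ n) (hne : Even n)
    (c : ℝ → ℂ)
    (hc : ∀ l : ℝ, l ≠ 0 → c l =
      (2 : ℂ) ^ ((n : ℂ) - 2 * Complex.I * (l : ℂ)) * Complex.Gamma ((n : ℂ) / 2) *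
        Complex.Gamma (2 * Complex.I * (l : ℂ)) /
        (Complex.Gamma (Complex.I * (l : ℂ) + (n : ℂ) / 2) * Complex.Gamma (Complex.I * (l : ℂ))))
    (ν : ℝ → ℝ)
    (hν : ∀ l : ℝ, l ≠ 0 → ν l = (2 / Real.pi) * ((‖c l‖) ^ 2)⁻¹) :
    ∃ C₁ C₂ : ℝ, 0 < C₁ ∧ 0 < C₂ ∧ ∀ l : ℝ, l ≠ 0 →
      C₁ * (1 + |l|) ^ (n - 1) ≤ ν l ∧ ν l ≤ C₂ * (1 + |l|) ^ (n - 1) := by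
  obtain ⟨k, hk⟩ : ∃ k, n = 2*(k+1) := by
    obtain ⟨j, hj⟩ := hne
    exact ⟨j - 1, by omega⟩
  have hπ := Real.pi_pos
  set K : ℝ := 8 / (2^(2*n) * ((Nat.factorial k : ℝ))^2) with hK
  have hK0 : 0 < K := by positivity
  -- the key exact formula
  have hkey : ∀ l : ℝ, l ≠ 0 → ν l = K *
      (l * Real.cosh (π*l) / Real.sinh (π*l)) *
      ∏ j ∈ Finset.range k, (l^2 + ((j:ℝ)+1)^2) := by
    intro l hl
    have h2l : (2*l : ℝ) ≠ 0 := by simp [hl]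
    set a := ‖Complex.Gamma (Complex.I * l)‖ with ha
    set b := ‖Complex.Gamma (Complex.I * ((2*l : ℝ) : ℂ))‖ with hb
    have ha0 : 0 < a := norm_pos_iff.mpr (Gamma_I_mul_ne_zero l hl)
    have hb0 : 0 < b := norm_pos_iff.mpr (Gamma_I_mul_ne_zero (2*l) h2l)
    have f1 := abs_gamma_I_sq l hl
    have f2 := abs_gamma_I_sq (2*l) h2l
    set p := ∏ j ∈ Finset.range (k+1), ‖Complex.I * l + j‖ with hp
    have hp2 : p^2 = ∏ j ∈ Finset.range (k+1), (l^2 + (j:ℝ)^2) := by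
      rw [hp, ← Finset.prod_pow]
      apply Finset.prod_congr rfl
      intro j _
      rw [Complex.sq_norm, Complex.normSq_apply]
      simp
      ring
    have hp0 : 0 < p := by
      apply Finset.prod_pos
      intro j _
      apply norm_pos_iff.mpr
      intro h
      have := congrArg Complex.im h
      simp [hl] at this
    have hcabs : ‖c l‖ = (2^n * (Nat.factorial k : ℝ) * b) / (p * a * a) := by
      rw [hc l hl]
      have e2 : ((n : ℂ)/2) = ((k:ℂ) + 1) := by
        rw [hk]; push_cast; ring
      have e3 : ‖Complex.Gamma ((n : ℂ)/2)‖ = (Nat.factorial k : ℝ) := by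
        rw [e2, Complex.Gamma_nat_eq_factorial k]
        simp
      have e4 : (2 * Complex.I * (l:ℂ)) = Complex.I * ((2*l : ℝ) : ℂ) := by
        push_cast; ring
      have e5 : Complex.Gamma (Complex.I * (l:ℂ) + (n:ℂ)/2) =
          (∏ j ∈ Finset.range (k+1), (Complex.I * l + j)) * Complex.Gamma (Complex.I * l) := by
        rw [show ((n:ℂ)/2) = ((k+1 : ℕ) : ℂ) by rw [hk]; push_cast; ring]
        exact gamma_shift l hl (k+1)
      have e1 : ‖(2 : ℂ) ^ ((n : ℂ) - Complex.I * ((2*l : ℝ) : ℂ))‖ = 2^n := by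
        rw [show (2:ℂ) = ((2:ℝ):ℂ) by norm_num,
          Complex.norm_cpow_eq_rpow_re_of_pos (by norm_num : (0:ℝ) < 2)]
        simp [Real.rpow_natCast]
      rw [e5, e4]
      rw [norm_div, norm_mul, norm_mul, norm_mul, norm_mul, e1, e3, norm_prod]
    have hs1 : Real.sinh (π*l) ≠ 0 := Real.sinh_ne_zero.mpr (mul_ne_zero Real.pi_ne_zero hl)
    have hfac : (0:ℝ) < (Nat.factorial k : ℝ) := by positivity
    have ha2 : a^2 = π / (l * Real.sinh (π*l)) := by
      rw [eq_div_iff (by intro h; rw [h, mul_zero] at f1; exact Real.pi_ne_zero f1.symm)]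
      exact f1
    have hb2 : b^2 = π / ((2*l) * Real.sinh (π*(2*l))) := by
      rw [eq_div_iff (by intro h; rw [h, mul_zero] at f2; exact Real.pi_ne_zero f2.symm)]
      exact f2
    have hs2 : Real.sinh (π*(2*l)) = 2 * Real.sinh (π*l) * Real.cosh (π*l) := by
      rw [show π*(2*l) = 2*(π*l) by ring, Real.sinh_two_mul]
    have hprod : (∏ j ∈ Finset.range (k+1), (l^2 + (j:ℝ)^2)) =
        l^2 * ∏ j ∈ Finset.range k, (l^2 + ((j:ℝ)+1)^2) := by
      rw [Finset.prod_range_succ']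
      push_cast
      simp [mul_comm]
    rw [hν l hl, hcabs]
    rw [div_pow, mul_pow, mul_pow, mul_pow, mul_pow, hp2, hprod, hb2, ha2, hs2]
    have h2n : ((2:ℝ)^n)^2 = 2^(2*n) := by rw [← pow_mul]; ring_nf
    rw [h2n, hK]
    field_simp
    ring
  -- now bounds
  refine ⟨K * (1/(4*π)) * (1/2)^k, K * ((k:ℝ)+1)^(2*k), by positivity, by positivity, ?_⟩
  intro l hl
  set L := |l| with hL
  have hL0 : 0 < L := abs_pos.mpr hl
  have hL1 : 0 < 1 + L := by linarith
  -- evenness of t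
  have ht_even : l * Real.cosh (π*l) / Real.sinh (π*l)
      = L * Real.cosh (π*L) / Real.sinh (π*L) := by
    rcases abs_choice l with h | h
    · rw [hL, h]
    · rw [hL, h, show π * -l = -(π*l) by ring, Real.cosh_neg, Real.sinh_neg]
      field_simp
  have hcoth := coth_bounds L hL0
  -- product bounds
  have hQlow : ((1+L)^2/2)^k ≤ ∏ j ∈ Finset.range k, (l^2 + ((j:ℝ)+1)^2) := by
    rw [show ((1+L)^2/2)^k = ∏ _j ∈ Finset.range k, ((1+L)^2/2) by
      rw [Finset.prod_const, Finset.card_range]]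
    apply Finset.prod_le_prod
    · intro j _; positivity
    · intro j _
      have h1 : l^2 = L^2 := (_root_.sq_abs l).symm
      have hj0 : (0:ℝ) ≤ (j:ℝ) := Nat.cast_nonneg j
      have : (1:ℝ) ≤ ((j:ℝ)+1)^2 := by nlinarith
      nlinarith [sq_nonneg (1 - L)]
  have hQhigh : (∏ j ∈ Finset.range k, (l^2 + ((j:ℝ)+1)^2))
      ≤ (((k:ℝ)+1)^2*(1+L)^2)^k := by
    rw [show ((((k:ℝ)+1)^2*(1+L)^2))^k = ∏ _j ∈ Finset.range k, (((k:ℝ)+1)^2*(1+L)^2) by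
      rw [Finset.prod_const, Finset.card_range]]
    apply Finset.prod_le_prod
    · intro j _; positivity
    · intro j hj
      have hjk : (j:ℝ)+1 ≤ (k:ℝ)+1 := by
        have := Finset.mem_range.mp hj
        have : (j:ℝ) ≤ (k:ℝ) := by exact_mod_cast this.le
        linarith
      have h1 : l^2 = L^2 := (_root_.sq_abs l).symm
      have hj0 : (0:ℝ) ≤ (j:ℝ) := Nat.cast_nonneg j
      have hk0' : (0:ℝ) ≤ (k:ℝ) := Nat.cast_nonneg k
      have h2 : ((j:ℝ)+1)^2 ≤ ((k:ℝ)+1)^2 := by nlinarith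
      have hk1 : (1:ℝ) ≤ ((k:ℝ)+1)^2 := by nlinarith
      have h3 := mul_le_mul_of_nonneg_right hk1 (sq_nonneg L)
      rw [one_mul] at h3
      have hexpand : ((k:ℝ)+1)^2*(1+L)^2
          = ((k:ℝ)+1)^2 + 2*(((k:ℝ)+1)^2*L) + ((k:ℝ)+1)^2*L^2 := by ring
      have hpos : 0 ≤ ((k:ℝ)+1)^2*L := mul_nonneg (sq_nonneg _) hL0.le
      linarith [h2, h3, hk1, hpos]
  have hQ0 : (0:ℝ) < ∏ j ∈ Finset.range k, (l^2 + ((j:ℝ)+1)^2) := by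
    apply Finset.prod_pos; intro j _; positivity
  have hn1 : n - 1 = 2*k+1 := by omega
  have hpow : (1+L)^(n-1) = (1+L) * ((1+L)^2)^k := by
    rw [hn1, ← pow_mul, pow_succ, mul_comm 2 k, mul_comm]
  rw [hkey l hl, ht_even]
  have ht0 : 0 < L * Real.cosh (π*L) / Real.sinh (π*L) := by
    have := hcoth.1
    have h0 : 0 < (1/(4*π)) * (1 + L) := by positivity
    linarith
  constructor
  · have expand : K * (1/(4*π)) * (1/2)^k * (1+L)^(n-1)
        = K * ((1/(4*π)) * (1+L)) * (((1+L)^2/2)^k) := by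
      rw [hpow, div_pow, div_pow, one_pow]
      have h2k : (0:ℝ) < 2^k := by positivity
      field_simp
    rw [expand]
    have step1 : K * ((1/(4*π)) * (1+L)) * (((1+L)^2/2)^k)
        ≤ K * (L * Real.cosh (π*L) / Real.sinh (π*L)) * (((1+L)^2/2)^k) := by
      apply mul_le_mul_of_nonneg_right _ (by positivity)
      exact mul_le_mul_of_nonneg_left hcoth.1 hK0.le
    refine step1.trans ?_
    apply mul_le_mul_of_nonneg_left hQlow (by positivity)
  · have expand : K * ((k:ℝ)+1)^(2*k) * (1+L)^(n-1)
        = K * (1+L) * ((((k:ℝ)+1)^2*(1+L)^2)^k) := by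
      rw [hpow, mul_pow, pow_mul ((k:ℝ)+1) 2 k]
      ring
    rw [expand]
    have step1 : K * (L * Real.cosh (π*L) / Real.sinh (π*L)) *
          (∏ j ∈ Finset.range k, (l^2 + ((j:ℝ)+1)^2))
        ≤ K * (1+L) * (∏ j ∈ Finset.range k, (l^2 + ((j:ℝ)+1)^2)) := by
      apply mul_le_mul_of_nonneg_right _ hQ0.le
      exact mul_le_mul_of_nonneg_left hcoth.2 hK0.le
    refine step1.trans ?_
    apply mul_le_mul_of_nonneg_left hQhigh (by positivity)
end

section
/- Let V be a real normed vector space, let x, y ∈ V with ‖y‖ < ‖x‖, and let t ≥ 0. Set u = (cosh t)·x + (sinh t)·y and v = (sinh t)·x + (cosh t)·y. Then e^t·‖x + y‖ ≤ ‖u‖ + ‖v‖ ≤ e^t·‖x + y‖·(1 + e^{−2t}·(‖x‖ + ‖y‖)/(‖x‖ − ‖y‖)). In particular, the quantity E := log(‖u‖ + ‖v‖) − log ‖x + y‖ − t satisfies 0 ≤ E ≤ e^{−2t}·(‖x‖ + ‖y‖)/(‖x‖ − ‖y‖). -/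
open Real

/-- Cartan vs Iwasawa projection estimate in a real normed space: for
`‖y‖ < ‖x‖`, `t ≥ 0`, `u = cosh t • x + sinh t • y`,
`v = sinh t • x + cosh t • y`, one has
`e^t·‖x+y‖ ≤ ‖u‖ + ‖v‖ ≤ e^t·‖x+y‖·(1 + e^(−2t)·(‖x‖+‖y‖)/(‖x‖−‖y‖))`, and
`E := log(‖u‖+‖v‖) − log ‖x+y‖ − t` satisfies
`0 ≤ E ≤ e^(−2t)·(‖x‖+‖y‖)/(‖x‖−‖y‖)`. -/
theorem cartan_iwasawa_estimate
    {V : Type*} [NormedAddCommGroup V] [NormedSpace ℝ V]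
    (x y : V) (hxy : ‖y‖ < ‖x‖) (t : ℝ) (ht : 0 ≤ t)
    (u v : V)
    (hu : u = Real.cosh t • x + Real.sinh t • y)
    (hv : v = Real.sinh t • x + Real.cosh t • y) :
    (Real.exp t * ‖x + y‖ ≤ ‖u‖ + ‖v‖) ∧
    (‖u‖ + ‖v‖ ≤
      Real.exp t * ‖x + y‖ * (1 + Real.exp (-2 * t) * (‖x‖ + ‖y‖) / (‖x‖ - ‖y‖))) ∧
    (0 ≤ Real.log (‖u‖ + ‖v‖) - Real.log ‖x + y‖ - t) ∧
    (Real.log (‖u‖ + ‖v‖) - Real.log ‖x + y‖ - t ≤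
      Real.exp (-2 * t) * (‖x‖ + ‖y‖) / (‖x‖ - ‖y‖)) := by
  -- basic positivity facts
  have hN : (0:ℝ) < ‖x‖ - ‖y‖ := by linarith
  have h1 : ‖x‖ - ‖y‖ ≤ ‖x + y‖ := by
    have := norm_add_le (x + y) (-y)
    simp only [add_neg_cancel_right, norm_neg] at this
    linarith
  have hP : (0:ℝ) < ‖x + y‖ := lt_of_lt_of_le hN h1
  have het : (0:ℝ) < Real.exp t := Real.exp_pos t
  have hemt : (0:ℝ) < Real.exp (-t) := Real.exp_pos (-t)
  -- decompositions
  have hsum : u + v = Real.exp t • (x + y) := by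
    rw [hu, hv, ← Real.cosh_add_sinh t]; module
  have hu2 : u = (Real.exp t / 2) • (x + y) + (Real.exp (-t) / 2) • (x - y) := by
    rw [hu, Real.cosh_eq, Real.sinh_eq]; module
  have hv2 : v = (Real.exp t / 2) • (x + y) - (Real.exp (-t) / 2) • (x - y) := by
    rw [hv, Real.cosh_eq, Real.sinh_eq]; module
  -- lower bound
  have hlow : Real.exp t * ‖x + y‖ ≤ ‖u‖ + ‖v‖ := by
    have h := norm_add_le u v
    rw [hsum, norm_smul, Real.norm_eq_abs, abs_of_pos het] at h
    linarith
  -- upper bound pieces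
  have hub : ‖u‖ + ‖v‖ ≤ Real.exp t * ‖x + y‖ + Real.exp (-t) * ‖x - y‖ := by
    have h1' : ‖u‖ ≤ Real.exp t / 2 * ‖x + y‖ + Real.exp (-t) / 2 * ‖x - y‖ := by
      rw [hu2]
      calc ‖(Real.exp t / 2) • (x + y) + (Real.exp (-t) / 2) • (x - y)‖
          ≤ ‖(Real.exp t / 2) • (x + y)‖ + ‖(Real.exp (-t) / 2) • (x - y)‖ :=
            norm_add_le _ _
        _ = Real.exp t / 2 * ‖x + y‖ + Real.exp (-t) / 2 * ‖x - y‖ := by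
            rw [norm_smul, norm_smul, Real.norm_eq_abs, Real.norm_eq_abs,
              abs_of_pos (by linarith), abs_of_pos (by linarith)]
    have h2' : ‖v‖ ≤ Real.exp t / 2 * ‖x + y‖ + Real.exp (-t) / 2 * ‖x - y‖ := by
      rw [hv2]
      calc ‖(Real.exp t / 2) • (x + y) - (Real.exp (-t) / 2) • (x - y)‖
          ≤ ‖(Real.exp t / 2) • (x + y)‖ + ‖(Real.exp (-t) / 2) • (x - y)‖ :=
            norm_sub_le _ _
        _ = Real.exp t / 2 * ‖x + y‖ + Real.exp (-t) / 2 * ‖x - y‖ := by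
            rw [norm_smul, norm_smul, Real.norm_eq_abs, Real.norm_eq_abs,
              abs_of_pos (by linarith), abs_of_pos (by linarith)]
    linarith
  set D : ℝ := Real.exp (-2 * t) * (‖x‖ + ‖y‖) / (‖x‖ - ‖y‖) with hD
  have hDnn : 0 ≤ D := by
    apply div_nonneg _ (le_of_lt hN)
    positivity
  have hee : Real.exp t * Real.exp (-2 * t) = Real.exp (-t) := by
    rw [← Real.exp_add]; ring_nf
  have hkey : Real.exp (-t) * ‖x - y‖ ≤ Real.exp t * ‖x + y‖ * D := by
    have hxy2 : ‖x - y‖ ≤ ‖x‖ + ‖y‖ := norm_sub_le x y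
    have h3 : ‖x - y‖ ≤ ‖x + y‖ * (‖x‖ + ‖y‖) / (‖x‖ - ‖y‖) := by
      rw [le_div_iff₀ hN]
      nlinarith [norm_nonneg (x - y)]
    have : Real.exp t * ‖x + y‖ * D
        = Real.exp (-t) * (‖x + y‖ * (‖x‖ + ‖y‖) / (‖x‖ - ‖y‖)) := by
      have hee' : Real.exp t * Real.exp (-(2 * t)) = Real.exp (-t) := by
        rw [← Real.exp_add]; ring_nf
      rw [hD]; field_simp
      linear_combination (‖x‖ + ‖y‖) * hee'
    rw [this]
    exact mul_le_mul_of_nonneg_left h3 (le_of_lt hemt)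
  have hup : ‖u‖ + ‖v‖ ≤ Real.exp t * ‖x + y‖ * (1 + D) := by
    have : Real.exp t * ‖x + y‖ * (1 + D)
        = Real.exp t * ‖x + y‖ + Real.exp t * ‖x + y‖ * D := by ring
    rw [this]
    linarith
  have hA : (0:ℝ) < ‖u‖ + ‖v‖ := lt_of_lt_of_le (by positivity) hlow
  have hlogup : Real.log (Real.exp t * ‖x + y‖ * (1 + D))
      = t + Real.log ‖x + y‖ + Real.log (1 + D) := by
    rw [Real.log_mul (by positivity) (by positivity),
      Real.log_mul (ne_of_gt het) (ne_of_gt hP), Real.log_exp]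
  have hloglow : Real.log (Real.exp t * ‖x + y‖) = t + Real.log ‖x + y‖ := by
    rw [Real.log_mul (ne_of_gt het) (ne_of_gt hP), Real.log_exp]
  have hE0 : 0 ≤ Real.log (‖u‖ + ‖v‖) - Real.log ‖x + y‖ - t := by
    have := Real.log_le_log (by positivity) hlow
    rw [hloglow] at this
    linarith
  have hE1 : Real.log (‖u‖ + ‖v‖) - Real.log ‖x + y‖ - t ≤ D := by
    have h4 := Real.log_le_log hA hup
    rw [hlogup] at h4
    have h5 : Real.log (1 + D) ≤ D := by
      have := Real.log_le_sub_one_of_pos (show (0:ℝ) < 1 + D by linarith)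
      linarith
    linarith
  exact ⟨hlow, hup, hE0, hE1⟩
end
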